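/- Let X ∈ ℝ^{n×p} be centered with all singular values of X/√n equal to γ, rows bounded by ‖X_i‖ ≤ R, and X^k = X + η e_k v(k)ᵀ with v(k) = X_k/‖X_k‖ a unit vector. Then the squared Frobenius distance of the corresponding squared-distance matrices satisfies ‖Δ(X^k) − Δ(X)‖_F² ≤ 16 n (η⁴ + η²(γ + R)²). -/

import Mathlib

open Matrix

/-- Euclidean norm of a vector. -/
noncomputable def vnorm {n : ℕ} (v : Fin n → ℝ) : ℝ := Real.sqrt (∑ i, v i ^ 2)

/-- The squared Euclidean distance matrix of the rows of `X`. -/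
noncomputable def sqDist {n p : ℕ} (X : Matrix (Fin n) (Fin p) ℝ) :
    Matrix (Fin n) (Fin n) ℝ :=
  Matrix.of fun i j => ∑ l, (X i l - X j l) ^ 2

/-- For a centered configuration with all singular values of `X/√n` equal to `γ`,
rows bounded by `R`, and `X^k = X + η e_k v(k)ᵀ` with `v(k) = X_k/‖X_k‖`, the
squared Frobenius distance of the squared-distance matrices satisfies
`‖Δ(X^k) − Δ(X)‖_F² ≤ 16 n (η⁴ + η² (γ + R)²)`. -/
theorem stmt15 (n p : ℕ) (hn : 0 < n) (γ η R : ℝ) (hγ : 0 ≤ γ) (hη : 0 ≤ η)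
    (X : Matrix (Fin n) (Fin p) ℝ) (k : Fin n)
    (hcent : ∀ j, ∑ i, X i j = 0)
    (hXtX : Xᵀ * X = (γ ^ 2 * n) • (1 : Matrix (Fin p) (Fin p) ℝ))
    (hrows : ∀ i, vnorm (X i) ≤ R)
    (hXk : X k ≠ 0) :
    ∑ i, ∑ j,
      ((sqDist (Matrix.of fun i j =>
          X i j + (if i = k then η * ((vnorm (X k))⁻¹ * X k j) else 0)) -
        sqDist X) i j) ^ 2
      ≤ 16 * n * (η ^ 4 + η ^ 2 * (γ + R) ^ 2) := by
  classical
  set m := vnorm (X k) with hmdef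
  have hm2 : m ^ 2 = ∑ l, X k l ^ 2 := by
    rw [hmdef, vnorm]; exact Real.sq_sqrt (by positivity)
  have hmpos : 0 < m := by
    rw [hmdef, vnorm]
    apply Real.sqrt_pos.2
    obtain ⟨l, hl⟩ := Function.ne_iff.1 hXk
    exact Finset.sum_pos' (fun i _ => sq_nonneg _) ⟨l, Finset.mem_univ l, by simpa using pow_two_pos_of_ne_zero hl⟩
  set c : Fin p → ℝ := fun l => m⁻¹ * X k l with hcdef
  have hc1 : ∑ l, c l ^ 2 = 1 := by
    have h : ∑ l, c l ^ 2 = m⁻¹ ^ 2 * ∑ l, X k l ^ 2 := by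
      rw [Finset.mul_sum]
      exact Finset.sum_congr rfl fun l _ => by rw [hcdef]; ring
    rw [h, ← hm2]
    field_simp
  set t : Fin n → ℝ := fun j => ∑ l, c l * X j l with htdef
  have htk : t k = m := by
    have h : t k = m⁻¹ * ∑ l, X k l ^ 2 := by
      rw [htdef]
      simp only
      rw [Finset.mul_sum]
      exact Finset.sum_congr rfl fun l _ => by rw [hcdef]; ring
    rw [h, ← hm2]
    field_simp
  set e : Fin n → ℝ := fun i => if i = k then η else 0 with hedef
  set u : Fin n → ℝ := fun i => if i = k then η ^ 2 else 0 with hudef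
  -- entry formula
  have hD : ∀ i j,
      (sqDist (Matrix.of fun i j =>
          X i j + (if i = k then η * (m⁻¹ * X k j) else 0)) - sqDist X) i j
      = (e i - e j) ^ 2 + 2 * (e i - e j) * (t i - t j) := by
    intro i j
    have expand : (sqDist (Matrix.of fun i j =>
          X i j + (if i = k then η * (m⁻¹ * X k j) else 0)) i j)
        = sqDist X i j + (e i - e j) ^ 2 * (∑ l, c l ^ 2)
          + 2 * (e i - e j) * ((∑ l, c l * X i l) - ∑ l, c l * X j l) := by
      simp only [sqDist, Matrix.of_apply]
      rw [Finset.mul_sum, ← Finset.sum_sub_distrib, Finset.mul_sum,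
        ← Finset.sum_add_distrib, ← Finset.sum_add_distrib]
      apply Finset.sum_congr rfl
      intro l _
      rw [hedef, hcdef]
      by_cases hi : i = k <;> by_cases hj : j = k <;> simp [hi, hj] <;> ring
    rw [Matrix.sub_apply, expand, hc1, htdef]
    ring
  -- pointwise bound
  have key : ∀ i j,
      ((sqDist (Matrix.of fun i j =>
          X i j + (if i = k then η * (m⁻¹ * X k j) else 0)) - sqDist X) i j) ^ 2
      ≤ (u i + u j) * (3 * η ^ 2 + 6 * (t i - t j) ^ 2) := by
    intro i j
    rw [hD i j]
    have ha1 : (e i - e j) ^ 2 ≤ u i + u j := by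
      rw [hedef, hudef]
      by_cases hi : i = k <;> by_cases hj : j = k <;> simp [hi, hj] <;> positivity
    have ha2 : (e i - e j) ^ 2 ≤ η ^ 2 := by
      rw [hedef]
      by_cases hi : i = k <;> by_cases hj : j = k <;> simp [hi, hj] <;> positivity
    have hU : 0 ≤ u i + u j := le_trans (sq_nonneg _) ha1
    nlinarith [sq_nonneg ((e i - e j) ^ 2 - (e i - e j) * (t i - t j)),
      sq_nonneg (t i - t j), sq_nonneg (e i - e j),
      mul_nonneg (sub_nonneg.2 ha1) (sq_nonneg (t i - t j)),
      mul_nonneg (sub_nonneg.2 ha2) (sq_nonneg (e i - e j)),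
      mul_nonneg (sub_nonneg.2 ha1) (sq_nonneg η)]
  have inner1 : ∀ g : Fin n → ℝ, ∑ i, u i * g i = η ^ 2 * g k := by
    intro g
    rw [hudef]
    simp [ite_mul]
  -- sum of bound
  have step2 : ∑ i, ∑ j, (u i + u j) * (3 * η ^ 2 + 6 * (t i - t j) ^ 2)
      = 6 * n * η ^ 4 + 12 * η ^ 2 * ∑ j, (t j - m) ^ 2 := by
    have hsplit : ∀ i j, (u i + u j) * (3 * η ^ 2 + 6 * (t i - t j) ^ 2)
        = u i * (3 * η ^ 2 + 6 * (t i - t j) ^ 2)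
          + u j * (3 * η ^ 2 + 6 * (t i - t j) ^ 2) := fun i j => by ring
    simp_rw [hsplit, Finset.sum_add_distrib]
    have h1 : ∑ i, ∑ j, u i * (3 * η ^ 2 + 6 * (t i - t j) ^ 2)
        = 3 * n * η ^ 4 + 6 * η ^ 2 * ∑ j, (t j - m) ^ 2 := by
      rw [Finset.sum_comm]
      have : ∀ j, ∑ i, u i * (3 * η ^ 2 + 6 * (t i - t j) ^ 2)
          = 3 * η ^ 4 + 6 * η ^ 2 * (t j - m) ^ 2 := by
        intro j
        rw [inner1 (fun i => 3 * η ^ 2 + 6 * (t i - t j) ^ 2), htk]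
        ring
      rw [Finset.sum_congr rfl fun j _ => this j, Finset.sum_add_distrib,
        Finset.sum_const, ← Finset.mul_sum]
      simp [Finset.card_univ]
      ring
    have h2 : ∑ i, ∑ j, u j * (3 * η ^ 2 + 6 * (t i - t j) ^ 2)
        = 3 * n * η ^ 4 + 6 * η ^ 2 * ∑ i, (t i - m) ^ 2 := by
      have : ∀ i, ∑ j, u j * (3 * η ^ 2 + 6 * (t i - t j) ^ 2)
          = 3 * η ^ 4 + 6 * η ^ 2 * (t i - m) ^ 2 := by
        intro i
        rw [inner1 (fun j => 3 * η ^ 2 + 6 * (t i - t j) ^ 2), htk]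
        ring
      rw [Finset.sum_congr rfl fun i _ => this i, Finset.sum_add_distrib,
        Finset.sum_const, ← Finset.mul_sum]
      simp [Finset.card_univ]
      ring
    rw [h1, h2]
    ring
  -- computing S
  have hsum_t : ∑ j, t j = 0 := by
    rw [htdef]
    simp only
    rw [Finset.sum_comm]
    have : ∀ l : Fin p, ∑ j, c l * X j l = 0 := by
      intro l
      rw [← Finset.mul_sum, hcent l, mul_zero]
    simp [this]
  have hXX : ∀ l l' : Fin p, ∑ j, X j l * X j l' = if l = l' then γ ^ 2 * n else 0 := by
    intro l l'
    have h := congrFun (congrFun hXtX l) l'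
    simp only [Matrix.mul_apply, Matrix.transpose_apply, Matrix.smul_apply,
      Matrix.one_apply, smul_eq_mul] at h
    rw [h]
    split <;> simp
  have hsum_t2 : ∑ j, t j ^ 2 = γ ^ 2 * n := by
    have h1 : ∀ j, t j ^ 2 = ∑ l, ∑ l', (c l * c l') * (X j l * X j l') := by
      intro j
      rw [htdef]
      simp only
      rw [sq, Finset.sum_mul_sum]
      exact Finset.sum_congr rfl fun l _ => Finset.sum_congr rfl fun l' _ => by ring
    rw [Finset.sum_congr rfl fun j _ => h1 j, Finset.sum_comm]
    have h2 : ∀ l, ∑ j, ∑ l', (c l * c l') * (X j l * X j l')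
        = γ ^ 2 * n * c l ^ 2 := by
      intro l
      rw [Finset.sum_comm]
      have h3 : ∀ l', ∑ j, (c l * c l') * (X j l * X j l')
          = (c l * c l') * (if l = l' then γ ^ 2 * n else 0) := by
        intro l'
        rw [← Finset.mul_sum, hXX l l']
      rw [Finset.sum_congr rfl fun l' _ => h3 l']
      simp [Finset.sum_ite_eq, mul_ite]
      ring
    rw [Finset.sum_congr rfl fun l _ => h2 l, ← Finset.mul_sum, hc1, mul_one]
  have hS : ∑ j, (t j - m) ^ 2 = γ ^ 2 * n + n * m ^ 2 := by
    have h : ∀ j, (t j - m) ^ 2 = t j ^ 2 - (2 * m) * t j + m ^ 2 := fun j => by ring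
    rw [Finset.sum_congr rfl fun j _ => h j, Finset.sum_add_distrib,
      Finset.sum_sub_distrib, ← Finset.mul_sum, hsum_t, hsum_t2, Finset.sum_const]
    simp [Finset.card_univ]
  -- final chain
  have hmR : m ≤ R := hrows k
  have hR : 0 < R := lt_of_lt_of_le hmpos hmR
  have hn' : (0 : ℝ) ≤ n := Nat.cast_nonneg n
  calc ∑ i, ∑ j, ((sqDist (Matrix.of fun i j =>
          X i j + (if i = k then η * (m⁻¹ * X k j) else 0)) - sqDist X) i j) ^ 2
      ≤ ∑ i, ∑ j, (u i + u j) * (3 * η ^ 2 + 6 * (t i - t j) ^ 2) :=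
        Finset.sum_le_sum fun i _ => Finset.sum_le_sum fun j _ => key i j
    _ = 6 * n * η ^ 4 + 12 * η ^ 2 * ∑ j, (t j - m) ^ 2 := step2
    _ = 6 * n * η ^ 4 + 12 * η ^ 2 * (γ ^ 2 * n + n * m ^ 2) := by rw [hS]
    _ ≤ 16 * n * (η ^ 4 + η ^ 2 * (γ + R) ^ 2) := by
        have hm2R : m ^ 2 ≤ R ^ 2 := by nlinarith
        nlinarith [mul_nonneg (mul_nonneg hn' (sq_nonneg η)) (mul_nonneg hγ hR.le),
          mul_nonneg (mul_nonneg hn' (sq_nonneg η)) (sq_nonneg γ),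
          mul_nonneg (mul_nonneg hn' (sq_nonneg η)) (sq_nonneg R),
          mul_nonneg hn' (sq_nonneg (η ^ 2)),
          mul_le_mul_of_nonneg_left hm2R (mul_nonneg hn' (sq_nonneg η))]
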